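/- Let C, U be nonempty subsets of a Euclidean space X, γ ≥ 1, β ≥ 0, and λ ∈ (0, 1 + β]. A set-valued operator T : X ⇉ X is (C, γ, β)-quasi firmly Fejér monotone on U if and only if T^λ := (1 − λ) Id + λ T is (C, 1 − λ + λγ, (1 − λ + β)/λ)-quasi firmly Fejér monotone on U. -/

import Mathlib

/-- `T` is `(C, γ, β)`-quasi firmly Fejér monotone on `U`. -/
def QuasiFirmlyFejer {X : Type*} [NormedAddCommGroup X] [InnerProductSpace ℝ X]
    (T : X → Set X) (C U : Set X) (gam beta : ℝ) : Prop :=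
  ∀ x ∈ U, ∀ xp ∈ T x, ∀ xb ∈ C,
    ‖xp - xb‖ ^ 2 + beta * ‖x - xp‖ ^ 2 ≤ gam * ‖x - xb‖ ^ 2

lemma norm_combo {X : Type*} [NormedAddCommGroup X] [InnerProductSpace ℝ X]
    (a b : X) (t : ℝ) :
    ‖(1 - t) • a + t • b‖ ^ 2
      = (1 - t) * ‖a‖ ^ 2 + t * ‖b‖ ^ 2 - t * (1 - t) * ‖a - b‖ ^ 2 := by
  have h1 : ∀ v : X, ‖v‖ ^ 2 = (inner ℝ v v : ℝ) := fun v =>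
    (real_inner_self_eq_norm_sq v).symm
  simp only [h1]
  simp only [inner_add_add_self, inner_sub_sub_self, real_inner_smul_left,
    real_inner_smul_right]
  ring_nf

lemma key_eq {X : Type*} [NormedAddCommGroup X] [InnerProductSpace ℝ X]
    (x s xb : X) (lam beta : ℝ) (hlam0 : 0 < lam) :
    ‖((1 - lam) • x + lam • s) - xb‖ ^ 2
        + (1 - lam + beta) / lam * ‖x - ((1 - lam) • x + lam • s)‖ ^ 2
      = (1 - lam) * ‖x - xb‖ ^ 2 + lam * ‖s - xb‖ ^ 2 + lam * beta * ‖x - s‖ ^ 2 := by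
  have e1 : ((1 - lam) • x + lam • s) - xb = (1 - lam) • (x - xb) + lam • (s - xb) := by
    module
  have e2 : x - ((1 - lam) • x + lam • s) = lam • (x - s) := by
    module
  rw [e1, e2, norm_combo, norm_smul]
  have : ((x - xb) - (s - xb)) = x - s := by abel
  rw [this]
  have hl : lam ≠ 0 := ne_of_gt hlam0
  field_simp
  ring_nf
  simp [abs_of_pos hlam0]
  ring

theorem gDR_averaged_qffm {X : Type*} [NormedAddCommGroup X] [InnerProductSpace ℝ X]
    (C U : Set X) (hCne : C.Nonempty) (hUne : U.Nonempty)
    (gam beta lam : ℝ) (hgam : 1 ≤ gam) (hbeta : 0 ≤ beta)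
    (hlam0 : 0 < lam) (hlam1 : lam ≤ 1 + beta)
    (T : X → Set X) :
    QuasiFirmlyFejer T C U gam beta ↔
      QuasiFirmlyFejer (fun x => (fun s => (1 - lam) • x + lam • s) '' T x) C U
        (1 - lam + lam * gam) ((1 - lam + beta) / lam) := by
  constructor
  · intro h x hx xp hxp xb hxb
    obtain ⟨s, hs, rfl⟩ := hxp
    have hb := h x hx s hs xb hxb
    rw [key_eq x s xb lam beta hlam0]
    nlinarith [hb, hlam0]
  · intro h x hx s hs xb hxb
    have hb := h x hx ((1 - lam) • x + lam • s) ⟨s, hs, rfl⟩ xb hxb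
    rw [key_eq x s xb lam beta hlam0] at hb
    nlinarith [hb, hlam0]
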